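/- Let q ≥ 2 be an integer and let f be a real-valued q-additive function. Then for every real t, every integer h ≥ 1 and every integer N ≥ q^h, with L = ⌊log_q N⌋, one has |φ_N(t) − φ_{q^{L+1}}(t)| ≤ 2/q^{h−1} + 2√2 · ∑_{j=L−h+1}^{L} max_{1≤d≤q−1} (1 − cos(t·f(d q^j)))^{1/2}, where φ_M(t) = (1/M) ∑_{n<M} e^{i t f(n)}. -/

import Mathlib

open Filter Finset Topology

/-- `f : ℕ → ℝ` is `q`-additive. -/
def IsQAdditive (q : ℕ) (f : ℕ → ℝ) : Prop :=
  ∀ n : ℕ, f n = ∑ j ∈ Finset.range n, f (n / q ^ j % q * q ^ j)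

/-- Empirical characteristic function `φ_M(t) = (1/M) ∑_{n<M} e^{i t f(n)}`. -/
noncomputable def empCharFun (f : ℕ → ℝ) (M : ℕ) (t : ℝ) : ℂ :=
  (∑ n ∈ Finset.range M, Complex.exp (Complex.I * t * f n)) / M

section Aux

variable {q : ℕ} {f : ℕ → ℝ}

lemma DelangeAux.f_zero (hq : 2 ≤ q) (hf : IsQAdditive q f) : f 0 = 0 := by
  have h2 := hf 2
  rcases eq_or_lt_of_le hq with hq2 | hq3
  · subst hq2
    simp [Finset.sum_range_succ] at h2
    linarith
  · have h1 : (2:ℕ) / q = 0 := Nat.div_eq_of_lt hq3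
    have h2' : (2:ℕ) % q = 2 := Nat.mod_eq_of_lt hq3
    simp [Finset.sum_range_succ, h1, h2'] at h2
    linarith

lemma DelangeAux.f_eq_sum (hq : 2 ≤ q) (hf : IsQAdditive q f) {m n : ℕ} (hn : n < q ^ m) :
    f n = ∑ j ∈ Finset.range m, f (n / q ^ j % q * q ^ j) := by
  have key : ∀ j, n ≤ j ∨ m ≤ j → f (n / q ^ j % q * q ^ j) = 0 := by
    intro j hj
    have hq' : n < q ^ j := by
      rcases hj with hj | hj
      · calc n < 2 ^ n := Nat.lt_two_pow_self
          _ ≤ 2 ^ j := Nat.pow_le_pow_right (by norm_num) hj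
          _ ≤ q ^ j := Nat.pow_le_pow_left hq j
      · exact lt_of_lt_of_le hn (Nat.pow_le_pow_right (by omega) hj)
    rw [Nat.div_eq_of_lt hq']
    simpa using DelangeAux.f_zero hq hf
  have h1 : f n = ∑ j ∈ Finset.range (max n m), f (n / q ^ j % q * q ^ j) := by
    rw [hf n]
    exact Finset.sum_subset (Finset.range_subset_range.2 (le_max_left _ _))
      (fun j _ hj => key j (Or.inl (by simpa using hj)))
  rw [h1]
  exact (Finset.sum_subset (Finset.range_subset_range.2 (le_max_right _ _))
    (fun j _ hj => key j (Or.inr (by simpa using hj)))).symm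

lemma DelangeAux.digit_zero (hq : 2 ≤ q) {K k c : ℕ} (hdvd : q ^ K ∣ c) (hk : k < K) :
    c / q ^ k % q = 0 := by
  obtain ⟨e, rfl⟩ := hdvd
  have hc2 : q ^ K * e = q ^ k * (q * (q ^ (K - k - 1) * e)) := by
    have hje : q ^ K = q ^ k * (q * q ^ (K - k - 1)) := by
      rw [← pow_succ', ← pow_add]
      congr 1
      omega
    rw [hje]
    ring
  rw [hc2, Nat.mul_div_cancel_left _ (pow_pos (by omega : 0 < q) _), Nat.mul_mod_right]

lemma DelangeAux.f_add_of (hq : 2 ≤ q) (hf : IsQAdditive q f) {j a c : ℕ}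
    (ha : a < q ^ j) (hc : q ^ j ∣ c) : f (c + a) = f c + f a := by
  obtain ⟨e, hcdef⟩ := hc
  have hm : ∃ m, j ≤ m ∧ c + a < q ^ m := by
    have h1 : c + a < 2 ^ (c + a) := Nat.lt_two_pow_self
    have h2 : 2 ^ (c + a) ≤ q ^ (j + c + a + 1) :=
      le_trans (Nat.pow_le_pow_right (by norm_num) (by omega)) (Nat.pow_le_pow_left hq _)
    exact ⟨j + c + a + 1, by omega, lt_of_lt_of_le h1 h2⟩
  obtain ⟨m, hjm, hcam⟩ := hm
  have dig_lo : ∀ k < j, (c + a) / q ^ k % q = a / q ^ k % q := by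
    intro k hk
    have hdvd : q ^ k ∣ c := (pow_dvd_pow q hk.le).trans ⟨e, hcdef⟩
    obtain ⟨x, hx⟩ := hdvd
    have hq0 : 0 < q ^ k := pow_pos (by omega : 0 < q) _
    have hdiv : (c + a) / q ^ k = x + a / q ^ k := by
      rw [hx, Nat.mul_add_div hq0]
    have hxq : q ∣ x := by
      have hK1 : q ^ (k+1) ∣ c := (pow_dvd_pow q (by omega)).trans ⟨e, hcdef⟩
      obtain ⟨y, hy⟩ := hK1
      have hxy : q ^ k * x = q ^ k * (q * y) := by rw [← hx, hy]; ring
      exact ⟨y, Nat.eq_of_mul_eq_mul_left hq0 hxy⟩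
    obtain ⟨y, rfl⟩ := hxq
    rw [hdiv, Nat.mul_add_mod]
  have dig_hi : ∀ k, j ≤ k → (c + a) / q ^ k = c / q ^ k ∧ a / q ^ k = 0 := by
    intro k hk
    have haj : a / q ^ k = 0 :=
      Nat.div_eq_of_lt (lt_of_lt_of_le ha (Nat.pow_le_pow_right (by omega) hk))
    refine ⟨?_, haj⟩
    have h1 : (c + a) / q ^ j = e := by
      rw [hcdef, Nat.mul_add_div (pow_pos (by omega : 0 < q) _),
        Nat.div_eq_of_lt ha, Nat.add_zero]
    have h2 : c / q ^ j = e := by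
      rw [hcdef, Nat.mul_div_cancel_left _ (pow_pos (by omega : 0 < q) _)]
    have hsplit : ∀ x : ℕ, x / q ^ k = x / q ^ j / q ^ (k - j) := by
      intro x
      rw [Nat.div_div_eq_div_mul, ← pow_add, Nat.add_sub_cancel' hk]
    rw [hsplit (c+a), hsplit c, h1, h2]
  have hjm' : a < q ^ m := lt_of_le_of_lt (Nat.le_add_left a c) hcam
  have hsum : f (c + a) = ∑ k ∈ Finset.range m, f ((c + a) / q ^ k % q * q ^ k) :=
    DelangeAux.f_eq_sum hq hf hcam
  have hsumc : f c = ∑ k ∈ Finset.range m, f (c / q ^ k % q * q ^ k) :=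
    DelangeAux.f_eq_sum hq hf (lt_of_le_of_lt (Nat.le_add_right c a) hcam)
  have hsuma : f a = ∑ k ∈ Finset.range j, f (a / q ^ k % q * q ^ k) :=
    DelangeAux.f_eq_sum hq hf ha
  have hrange : Finset.range m = Finset.range j ∪ Finset.Ico j m := by
    rw [Finset.range_eq_Ico, Finset.range_eq_Ico, Finset.Ico_union_Ico_eq_Ico (Nat.zero_le j) hjm]
  have hdisj : Disjoint (Finset.range j) (Finset.Ico j m) := by
    simp only [Finset.disjoint_left, Finset.mem_range, Finset.mem_Ico]
    intro x hx
    omega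
  rw [hsum, hsumc, hrange, Finset.sum_union hdisj, Finset.sum_union hdisj, hsuma]
  have e1 : ∑ k ∈ Finset.range j, f ((c + a) / q ^ k % q * q ^ k)
      = ∑ k ∈ Finset.range j, f (a / q ^ k % q * q ^ k) :=
    Finset.sum_congr rfl fun k hk => by rw [dig_lo k (Finset.mem_range.1 hk)]
  have e2 : ∑ k ∈ Finset.Ico j m, f ((c + a) / q ^ k % q * q ^ k)
      = ∑ k ∈ Finset.Ico j m, f (c / q ^ k % q * q ^ k) :=
    Finset.sum_congr rfl fun k hk => by rw [(dig_hi k (Finset.mem_Ico.1 hk).1).1]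
  have e3 : ∑ k ∈ Finset.range j, f (c / q ^ k % q * q ^ k) = 0 := by
    refine Finset.sum_eq_zero fun k hk => ?_
    rw [DelangeAux.digit_zero hq ⟨e, hcdef⟩ (Finset.mem_range.1 hk)]
    simpa using DelangeAux.f_zero hq hf
  rw [e1, e2, e3]
  ring

lemma DelangeAux.abs_prod_sub_one {ι : Type*} (s : Finset ι) (z : ι → ℂ)
    (hz : ∀ i ∈ s, ‖z i‖ ≤ 1) :
    ‖∏ i ∈ s, z i - 1‖ ≤ ∑ i ∈ s, ‖z i - 1‖ := by
  classical
  induction s using Finset.induction with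
  | empty => simp
  | insert a s hns ih =>
    rw [Finset.prod_insert hns, Finset.sum_insert hns]
    have hP : ‖∏ i ∈ s, z i‖ ≤ 1 := by
      rw [norm_prod]
      exact Finset.prod_le_one (fun i _ => norm_nonneg _)
        (fun i hi => hz i (Finset.mem_insert_of_mem hi))
    calc ‖z a * ∏ i ∈ s, z i - 1‖
        ≤ ‖z a * ∏ i ∈ s, z i - ∏ i ∈ s, z i‖
          + ‖∏ i ∈ s, z i - 1‖ := by
          have h3 := dist_triangle (z a * ∏ i ∈ s, z i) (∏ i ∈ s, z i) 1
          rwa [dist_eq_norm, dist_eq_norm, dist_eq_norm] at h3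
      _ ≤ ‖z a - 1‖ + ∑ i ∈ s, ‖z i - 1‖ := by
          have habs : ‖z a * ∏ i ∈ s, z i - ∏ i ∈ s, z i‖
              = ‖z a - 1‖ * ‖∏ i ∈ s, z i‖ := by
            rw [← norm_mul]
            ring_nf
          rw [habs]
          have h2 := ih (fun i hi => hz i (Finset.mem_insert_of_mem hi))
          nlinarith [norm_nonneg (z a - 1)]

lemma DelangeAux.abs_exp_I_sub_one (θ : ℝ) :
    ‖Complex.exp (Complex.I * θ) - 1‖
      = Real.sqrt 2 * Real.sqrt (1 - Real.cos θ) := by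
  have h1 : Complex.I * θ = (θ : ℂ) * Complex.I := by ring
  rw [h1, Complex.exp_mul_I]
  have h2 : Complex.cos θ + Complex.sin θ * Complex.I - 1
      = ((Real.cos θ - 1 : ℝ) : ℂ) + ((Real.sin θ : ℝ) : ℂ) * Complex.I := by
    rw [← Complex.ofReal_cos, ← Complex.ofReal_sin]
    push_cast
    ring
  rw [h2, Complex.norm_def, Complex.normSq_add_mul_I]
  rw [← Real.sqrt_mul (by norm_num : (0:ℝ) ≤ 2)]
  congr 1
  nlinarith [Real.sin_sq_add_cos_sq θ]

lemma DelangeAux.sum_range_mul_pow {F : ℕ → ℂ} (B M : ℕ) :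
    ∑ n ∈ Finset.range (B * M), F n
      = ∑ b ∈ Finset.range B, ∑ a ∈ Finset.range M, F (b * M + a) := by
  rcases Nat.eq_zero_or_pos M with rfl | hM
  · simp
  have h1 : ∑ b ∈ Finset.range B, ∑ a ∈ Finset.range M, F (b * M + a)
      = ∑ p ∈ Finset.range B ×ˢ Finset.range M, F (p.1 * M + p.2) := by
    rw [Finset.sum_product]
  rw [h1]
  refine Finset.sum_nbij' (fun n => (n / M, n % M)) (fun p => p.1 * M + p.2)
    ?_ ?_ ?_ ?_ ?_
  · intro n hn
    simp only [Finset.mem_range] at hn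
    simp only [Finset.mem_product, Finset.mem_range]
    exact ⟨Nat.div_lt_iff_lt_mul hM |>.2 hn, Nat.mod_lt _ hM⟩
  · intro p hp
    simp only [Finset.mem_product, Finset.mem_range] at hp
    simp only [Finset.mem_range]
    calc p.1 * M + p.2 < p.1 * M + M := by omega
      _ = (p.1 + 1) * M := by ring
      _ ≤ B * M := Nat.mul_le_mul_right _ (by omega)
  · intro n hn
    simp only
    rw [mul_comm]
    exact Nat.div_add_mod n M
  · intro p hp
    simp only [Finset.mem_product, Finset.mem_range] at hp
    ext
    · simp only
      rw [mul_comm, Nat.mul_add_div hM, Nat.div_eq_of_lt hp.2, Nat.add_zero]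
    · simp only
      rw [mul_comm, Nat.mul_add_mod, Nat.mod_eq_of_lt hp.2]
  · intro n hn
    simp only
    congr 1
    rw [mul_comm]
    exact (Nat.div_add_mod n M).symm

end Aux

/-- **Delange's lemma.** For a `q`-additive `f`, all `h ≥ 1` and `N ≥ q^h`, with
`L = ⌊log_q N⌋`:
`|φ_N(t) − φ_{q^{L+1}}(t)| ≤ 2/q^{h−1} + 2√2 ∑_{j=L−h+1}^{L} max_{1≤d≤q−1} √(1 − cos(t f(d q^j)))`. -/
theorem delange_difference_lemma (q : ℕ) (hq : 2 ≤ q) (f : ℕ → ℝ) (hf : IsQAdditive q f)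
    (t : ℝ) (h : ℕ) (hh : 1 ≤ h) (N : ℕ) (hN : q ^ h ≤ N)
    (L : ℕ) (hL : L = Nat.floor (Real.logb q N)) :
    ‖empCharFun f N t - empCharFun f (q ^ (L + 1)) t‖ ≤
      2 / (q : ℝ) ^ (h - 1) +
        2 * Real.sqrt 2 * ∑ j ∈ Finset.Icc (L - h + 1) L,
          (Finset.Ico 1 q).sup' (Finset.nonempty_Ico.mpr (by omega))
            (fun d => Real.sqrt (1 - Real.cos (t * f (d * q ^ j)))) := by
  have hq1 : 1 < q := hq
  have hqpow : 0 < q ^ h := pow_pos (by omega : 0 < q) _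
  have hN0 : N ≠ 0 := by omega
  have hNpos : 0 < N := by omega
  -- L is the natural log
  have hLlog : L = Nat.log q N := by
    rw [hL, ← Int.floor_toNat, Real.floor_logb_natCast (by positivity),
      Int.log_natCast, Int.toNat_natCast]
  have hLN : q ^ L ≤ N := hLlog ▸ Nat.pow_log_le_self q hN0
  have hNL : N < q ^ (L + 1) := hLlog ▸ Nat.lt_pow_succ_log_self hq1 N
  have hhL : h ≤ L := hLlog ▸ (Nat.le_log_iff_pow_le hq1 hN0).2 hN
  set K := L - h + 1 with hK
  have hKh : K + h = L + 1 := by omega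
  have hQL1 : q ^ (L + 1) = q ^ h * q ^ K := by rw [← pow_add]; congr 1; omega
  set E : ℕ → ℂ := fun n => Complex.exp (Complex.I * t * f n) with hE
  have hEabs : ∀ n, ‖E n‖ = 1 := by
    intro n
    rw [hE]
    simp only
    rw [Complex.norm_exp]
    simp [Complex.mul_re]
  have hne : (Finset.Ico 1 q).Nonempty := Finset.nonempty_Ico.mpr (by omega)
  set M : ℕ → ℝ := fun j => (Finset.Ico 1 q).sup'
    hne (fun d => Real.sqrt (1 - Real.cos (t * f (d * q ^ j)))) with hM
  have hM0 : ∀ j, 0 ≤ M j := by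
    intro j
    have h1mem : (1:ℕ) ∈ Finset.Ico 1 q := Finset.mem_Ico.2 ⟨le_refl 1, by omega⟩
    refine le_trans ?_ (Finset.le_sup'
      (fun d => Real.sqrt (1 - Real.cos (t * f (d * q ^ j)))) h1mem)
    exact Real.sqrt_nonneg _
  set ε : ℝ := Real.sqrt 2 * ∑ j ∈ Finset.Icc K L, M j with hεdef
  have hε0 : 0 ≤ ε :=
    mul_nonneg (Real.sqrt_nonneg 2) (Finset.sum_nonneg fun j _ => hM0 j)
  -- key per-b bound
  have hEbound : ∀ b < q ^ h, ‖E (b * q ^ K) - 1‖ ≤ ε := by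
    intro b hb
    have hc : b * q ^ K < q ^ (L+1) := by
      rw [hQL1]
      have hp : 0 < q ^ K := pow_pos (by omega : 0 < q) _
      have h1 : (b + 1) * q ^ K ≤ q ^ h * q ^ K := Nat.mul_le_mul_right _ hb
      rw [add_mul, one_mul] at h1
      omega
    have hdisj2 : Disjoint (Finset.range K) (Finset.Ico K (L+1)) := by
      simp only [Finset.disjoint_left, Finset.mem_range, Finset.mem_Ico]
      intro x hx
      omega
    have hfc : f (b * q ^ K) = ∑ k ∈ Finset.Icc K L, f ((b * q ^ K) / q ^ k % q * q ^ k) := by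
      rw [DelangeAux.f_eq_sum hq hf hc]
      have hr : Finset.range (L+1) = Finset.range K ∪ Finset.Ico K (L+1) := by
        rw [Finset.range_eq_Ico, Finset.range_eq_Ico, Finset.Ico_union_Ico_eq_Ico (Nat.zero_le K) (by omega)]
      rw [hr, Finset.sum_union hdisj2]
      have hz : ∑ k ∈ Finset.range K, f ((b * q ^ K) / q ^ k % q * q ^ k) = 0 := by
        refine Finset.sum_eq_zero fun k hk => ?_
        rw [DelangeAux.digit_zero hq (dvd_mul_left (q ^ K) b) (Finset.mem_range.1 hk)]
        simpa using DelangeAux.f_zero hq hf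
      rw [hz, zero_add, Finset.Ico_add_one_right_eq_Icc]
    have hprod : E (b * q ^ K)
        = ∏ k ∈ Finset.Icc K L, E ((b * q ^ K) / q ^ k % q * q ^ k) := by
      rw [hE]
      simp only
      rw [hfc]
      push_cast
      rw [Finset.mul_sum, Complex.exp_sum]
    rw [hprod]
    refine le_trans (DelangeAux.abs_prod_sub_one _ _ (fun k _ => le_of_eq (hEabs _))) ?_
    rw [hεdef, Finset.mul_sum]
    refine Finset.sum_le_sum fun k hk => ?_
    set d := (b * q ^ K) / q ^ k % q with hd
    have hdq : d < q := Nat.mod_lt _ (by omega)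
    rcases Nat.eq_zero_or_pos d with hd0 | hd1
    · rw [hd0, Nat.zero_mul]
      have hE0 : E 0 = 1 := by
        rw [hE]
        simp [DelangeAux.f_zero hq hf]
      rw [hE0, sub_self, norm_zero]
      exact mul_nonneg (Real.sqrt_nonneg 2) (hM0 k)
    · have habs1 : ‖E (d * q ^ k) - 1‖
          = Real.sqrt 2 * Real.sqrt (1 - Real.cos (t * f (d * q ^ k))) := by
        rw [hE]
        simp only
        have harg : Complex.I * (t:ℂ) * ((f (d * q ^ k) : ℝ) : ℂ)
            = Complex.I * ((t * f (d * q ^ k) : ℝ) : ℂ) := by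
          push_cast
          ring
        rw [harg, DelangeAux.abs_exp_I_sub_one]
      rw [habs1]
      refine mul_le_mul_of_nonneg_left ?_ (Real.sqrt_nonneg 2)
      rw [hM]
      simp only
      exact Finset.le_sup' (fun d' => Real.sqrt (1 - Real.cos (t * f (d' * q ^ k))))
        (Finset.mem_Ico.2 ⟨hd1, hdq⟩)
  -- decompositions
  set B := N / q ^ K with hB
  set A := N % q ^ K with hA
  have hNBA : N = B * q ^ K + A := by rw [hB, hA, mul_comm]; exact (Nat.div_add_mod N _).symm
  have hApos : A < q ^ K := Nat.mod_lt _ (pow_pos (by omega : 0 < q) _)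
  have hBlt : B < q ^ h := by
    rw [hB, Nat.div_lt_iff_lt_mul (pow_pos (by omega : 0 < q) _)]
    calc N < q ^ (L+1) := hNL
      _ = q ^ h * q ^ K := hQL1
  have hsplitE : ∀ b a : ℕ, a < q ^ K → E (b * q ^ K + a) = E (b * q ^ K) * E a := by
    intro b a ha
    rw [hE]
    simp only
    rw [DelangeAux.f_add_of hq hf ha (dvd_mul_left (q ^ K) b)]
    push_cast
    rw [mul_add, Complex.exp_add]
  have hsum_full : ∑ n ∈ Finset.range (q ^ (L+1)), E n
      = (∑ b ∈ Finset.range (q ^ h), E (b * q ^ K)) * (∑ a ∈ Finset.range (q ^ K), E a) := by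
    rw [hQL1, DelangeAux.sum_range_mul_pow, Finset.sum_mul]
    refine Finset.sum_congr rfl fun b _ => ?_
    rw [Finset.mul_sum]
    exact Finset.sum_congr rfl fun a ha => hsplitE b a (Finset.mem_range.1 ha)
  have hBN : B * q ^ K ≤ N := Nat.div_mul_le_self N (q ^ K)
  have hsum_N : ∑ n ∈ Finset.range N, E n
      = (∑ b ∈ Finset.range B, E (b * q ^ K)) * (∑ a ∈ Finset.range (q ^ K), E a)
        + E (B * q ^ K) * ∑ a ∈ Finset.range A, E a := by
    rw [Finset.range_eq_Ico, ← Finset.sum_Ico_consecutive _ (Nat.zero_le (B * q ^ K)) hBN,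
      ← Finset.range_eq_Ico]
    congr 1
    · rw [DelangeAux.sum_range_mul_pow, Finset.sum_mul]
      refine Finset.sum_congr rfl fun b _ => ?_
      rw [Finset.mul_sum]
      exact Finset.sum_congr rfl fun a ha => hsplitE b a (Finset.mem_range.1 ha)
    · rw [Finset.sum_Ico_eq_sum_range]
      have hNsub : N - B * q ^ K = A := by omega
      rw [hNsub, Finset.mul_sum]
      exact Finset.sum_congr rfl fun a ha =>
        hsplitE B a (lt_trans (Finset.mem_range.1 ha) hApos)
  -- abbreviations
  set Sb := ∑ b ∈ Finset.range B, E (b * q ^ K) with hSbdef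
  set Sq := ∑ b ∈ Finset.range (q ^ h), E (b * q ^ K) with hSqdef
  set Sa := ∑ a ∈ Finset.range (q ^ K), E a with hSadef
  set Ra := ∑ a ∈ Finset.range A, E a with hRadef
  -- basic bounds
  have hSa : ‖Sa‖ ≤ ((q ^ K : ℕ) : ℝ) := by
    refine le_trans (norm_sum_le _ _) ?_
    simp [hEabs]
  have hRa : ‖Ra‖ ≤ (A : ℝ) := by
    refine le_trans (norm_sum_le _ _) ?_
    simp [hEabs]
  have hSb : ‖Sb - (B : ℂ)‖ ≤ B * ε := by
    have hdist : Sb - (B : ℂ) = ∑ b ∈ Finset.range B, (E (b * q ^ K) - 1) := by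
      rw [hSbdef, Finset.sum_sub_distrib]
      simp
    rw [hdist]
    refine le_trans (norm_sum_le _ _) ?_
    calc ∑ b ∈ Finset.range B, ‖E (b * q ^ K) - 1‖
        ≤ ∑ _b ∈ Finset.range B, ε :=
          Finset.sum_le_sum fun b hb =>
            hEbound b (lt_of_lt_of_le (Finset.mem_range.1 hb) hBlt.le)
      _ = B * ε := by rw [Finset.sum_const, Finset.card_range, nsmul_eq_mul]
  have hSq : ‖Sq - ((q ^ h : ℕ) : ℂ)‖ ≤ (q ^ h : ℕ) * ε := by
    have hdist : Sq - ((q ^ h : ℕ) : ℂ) = ∑ b ∈ Finset.range (q ^ h), (E (b * q ^ K) - 1) := by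
      rw [hSqdef, Finset.sum_sub_distrib]
      simp
    rw [hdist]
    refine le_trans (norm_sum_le _ _) ?_
    calc ∑ b ∈ Finset.range (q ^ h), ‖E (b * q ^ K) - 1‖
        ≤ ∑ _b ∈ Finset.range (q ^ h), ε :=
          Finset.sum_le_sum fun b hb => hEbound b (Finset.mem_range.1 hb)
      _ = (q ^ h : ℕ) * ε := by rw [Finset.sum_const, Finset.card_range, nsmul_eq_mul]
  -- the exact identity
  have hNC : (N : ℂ) ≠ 0 := Nat.cast_ne_zero.2 hN0
  have hQC : ((q ^ (L+1) : ℕ) : ℂ) ≠ 0 := Nat.cast_ne_zero.2 (by positivity)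
  have hφ1 : empCharFun f N t = (∑ n ∈ Finset.range N, E n) / (N : ℂ) := rfl
  have hφ2 : empCharFun f (q ^ (L+1)) t
      = (∑ n ∈ Finset.range (q ^ (L+1)), E n) / ((q ^ (L+1) : ℕ) : ℂ) := rfl
  have hid : empCharFun f N t - empCharFun f (q ^ (L+1)) t
      = ((Sb - (B : ℂ)) * Sa) / (N : ℂ)
        - ((Sq - ((q ^ h : ℕ) : ℂ)) * Sa) / ((q ^ (L+1) : ℕ) : ℂ)
        + ((B : ℂ) / (N : ℂ) - ((q ^ h : ℕ) : ℂ) / ((q ^ (L+1) : ℕ) : ℂ)) * Sa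
        + E (B * q ^ K) * Ra / (N : ℂ) := by
    rw [hφ1, hφ2, hsum_N, hsum_full]
    field_simp
    ring
  rw [hid]
  -- numeric facts
  have hNR : (0 : ℝ) < (N : ℝ) := by exact_mod_cast hNpos
  have hQKR : (0 : ℝ) < ((q ^ K : ℕ) : ℝ) := by positivity
  have hQLR : (0 : ℝ) < ((q ^ (L+1) : ℕ) : ℝ) := by positivity
  have hQh1R : (0 : ℝ) < (q : ℝ) ^ (h - 1) := by positivity
  have hnatkey : A * q ^ (h - 1) ≤ N := by
    have h1 : A + 1 ≤ q ^ K := hApos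
    calc A * q ^ (h-1) ≤ (q ^ K - 1) * q ^ (h-1) := Nat.mul_le_mul_right _ (by omega)
      _ = q ^ K * q ^ (h-1) - q ^ (h-1) := by rw [Nat.sub_mul, one_mul]
      _ ≤ q ^ L := by
          rw [← pow_add]
          have hKL : K + (h - 1) = L := by omega
          rw [hKL]
          exact Nat.sub_le _ _
      _ ≤ N := hLN
  have hANq : (A : ℝ) / (N : ℝ) ≤ 1 / (q : ℝ) ^ (h - 1) := by
    rw [div_le_div_iff₀ hNR hQh1R, one_mul]
    exact_mod_cast hnatkey
  -- term bounds
  have hT1 : ‖((Sb - (B : ℂ)) * Sa) / (N : ℂ)‖ ≤ ε := by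
    rw [norm_div, norm_mul, Complex.norm_natCast]
    rw [div_le_iff₀ hNR]
    calc ‖Sb - (B : ℂ)‖ * ‖Sa‖
        ≤ (B * ε) * ((q ^ K : ℕ) : ℝ) :=
          mul_le_mul hSb hSa (norm_nonneg _)
            (mul_nonneg (Nat.cast_nonneg B) hε0)
      _ = ε * ((B * q ^ K : ℕ) : ℝ) := by push_cast; ring
      _ ≤ ε * (N : ℝ) := by
          refine mul_le_mul_of_nonneg_left ?_ hε0
          exact_mod_cast hBN
  have hT2 : ‖((Sq - ((q ^ h : ℕ) : ℂ)) * Sa) / ((q ^ (L+1) : ℕ) : ℂ)‖ ≤ ε := by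
    rw [norm_div, norm_mul, Complex.norm_natCast]
    rw [div_le_iff₀ hQLR]
    calc ‖Sq - ((q ^ h : ℕ) : ℂ)‖ * ‖Sa‖
        ≤ ((q ^ h : ℕ) * ε) * ((q ^ K : ℕ) : ℝ) :=
          mul_le_mul hSq hSa (norm_nonneg _)
            (mul_nonneg (Nat.cast_nonneg _) hε0)
      _ = ε * ((q ^ (L+1) : ℕ) : ℝ) := by
          rw [hQL1]
          push_cast
          ring
  have hT3 : ‖((B : ℂ) / (N : ℂ)
      - ((q ^ h : ℕ) : ℂ) / ((q ^ (L+1) : ℕ) : ℂ)) * Sa‖ ≤ 1 / (q : ℝ) ^ (h - 1) := by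
    rw [norm_mul]
    have hx : (B : ℂ) / (N : ℂ) - ((q ^ h : ℕ) : ℂ) / ((q ^ (L+1) : ℕ) : ℂ)
        = ((((B : ℝ) / (N : ℝ) - ((q ^ h : ℕ) : ℝ) / ((q ^ (L+1) : ℕ) : ℝ)) : ℝ) : ℂ) := by
      push_cast
      ring
    rw [hx, Complex.norm_real, Real.norm_eq_abs]
    have hNr : (N : ℝ) = (B : ℝ) * ((q ^ K : ℕ) : ℝ) + (A : ℝ) := by exact_mod_cast hNBA
    have hQr : ((q ^ (L+1) : ℕ) : ℝ) = ((q ^ h : ℕ) : ℝ) * ((q ^ K : ℕ) : ℝ) := by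
      exact_mod_cast hQL1
    have hQhR : (0 : ℝ) < ((q ^ h : ℕ) : ℝ) := by positivity
    have hval : (B : ℝ) / (N : ℝ) - ((q ^ h : ℕ) : ℝ) / ((q ^ (L+1) : ℕ) : ℝ)
        = -((A : ℝ) / ((N : ℝ) * ((q ^ K : ℕ) : ℝ))) := by
      have e1 : ((q ^ h : ℕ) : ℝ) / ((q ^ (L+1) : ℕ) : ℝ) = 1 / ((q ^ K : ℕ) : ℝ) := by
        rw [hQr, div_mul_eq_div_div, div_self (ne_of_gt hQhR)]
      have e2 : (B : ℝ) * ((q ^ K : ℕ) : ℝ) - (N : ℝ) * 1 = -(A : ℝ) := by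
        rw [hNr]; ring
      rw [e1, div_sub_div _ _ (ne_of_gt hNR) (ne_of_gt hQKR), e2, neg_div]
    rw [hval, abs_neg, abs_of_nonneg (by positivity)]
    calc (A : ℝ) / ((N : ℝ) * ((q ^ K : ℕ) : ℝ)) * ‖Sa‖
        ≤ (A : ℝ) / ((N : ℝ) * ((q ^ K : ℕ) : ℝ)) * ((q ^ K : ℕ) : ℝ) := by
          refine mul_le_mul_of_nonneg_left hSa (by positivity)
      _ = (A : ℝ) / (N : ℝ) := by field_simp
      _ ≤ 1 / (q : ℝ) ^ (h - 1) := hANq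
  have hT4 : ‖E (B * q ^ K) * Ra / (N : ℂ)‖ ≤ 1 / (q : ℝ) ^ (h - 1) := by
    rw [norm_div, norm_mul, hEabs, one_mul, Complex.norm_natCast]
    calc ‖Ra‖ / (N : ℝ) ≤ (A : ℝ) / (N : ℝ) := by
          gcongr
      _ ≤ 1 / (q : ℝ) ^ (h - 1) := hANq
  have hsub : ∀ x y : ℂ, ‖x - y‖ ≤ ‖x‖ + ‖y‖ := by
    intro x y
    simpa [sub_eq_add_neg] using norm_add_le x (-y)
  have habs4 : ‖((Sb - (B : ℂ)) * Sa) / (N : ℂ)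
        - ((Sq - ((q ^ h : ℕ) : ℂ)) * Sa) / ((q ^ (L+1) : ℕ) : ℂ)
        + ((B : ℂ) / (N : ℂ) - ((q ^ h : ℕ) : ℂ) / ((q ^ (L+1) : ℕ) : ℂ)) * Sa
        + E (B * q ^ K) * Ra / (N : ℂ)‖
      ≤ ε + ε + 1 / (q : ℝ) ^ (h - 1) + 1 / (q : ℝ) ^ (h - 1) := by
    refine le_trans (norm_add_le _ _) ?_
    have step1 : ‖((Sb - (B : ℂ)) * Sa) / (N : ℂ)
          - ((Sq - ((q ^ h : ℕ) : ℂ)) * Sa) / ((q ^ (L+1) : ℕ) : ℂ)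
          + ((B : ℂ) / (N : ℂ) - ((q ^ h : ℕ) : ℂ) / ((q ^ (L+1) : ℕ) : ℂ)) * Sa‖
        ≤ ε + ε + 1 / (q : ℝ) ^ (h - 1) := by
      refine le_trans (norm_add_le _ _) ?_
      refine add_le_add ?_ hT3
      exact le_trans (hsub _ _) (add_le_add hT1 hT2)
    linarith [step1, hT4]
  calc ‖((Sb - (B : ℂ)) * Sa) / (N : ℂ)
        - ((Sq - ((q ^ h : ℕ) : ℂ)) * Sa) / ((q ^ (L+1) : ℕ) : ℂ)
        + ((B : ℂ) / (N : ℂ) - ((q ^ h : ℕ) : ℂ) / ((q ^ (L+1) : ℕ) : ℂ)) * Sa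
        + E (B * q ^ K) * Ra / (N : ℂ)‖
      ≤ ε + ε + 1 / (q : ℝ) ^ (h - 1) + 1 / (q : ℝ) ^ (h - 1) := habs4
    _ = 2 / (q : ℝ) ^ (h - 1) + 2 * Real.sqrt 2 * ∑ j ∈ Finset.Icc K L, M j := by
        rw [hεdef]; ring
    _ = 2 / (q : ℝ) ^ (h - 1) +
        2 * Real.sqrt 2 * ∑ j ∈ Finset.Icc K L,
          (Finset.Ico 1 q).sup' (Finset.nonempty_Ico.mpr (by omega))
            (fun d => Real.sqrt (1 - Real.cos (t * f (d * q ^ j)))) := rfl
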